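/- arXiv:1208.0870 — 5 statements merged into one kernel-verified Lean document; each statement's English description precedes it below -/
import Mathlib

section
/- Let Γ_1, …, Γ_m be i.i.d. random variables with the geometric distribution P(Γ_i = j) = (1-r) r^{j-1} for j ≥ 1, where 0 < r < 1. Let p_m be the probability that the multiset {Γ_1,…,Γ_m} is gap-free, i.e., contains every integer between 1 and max_i Γ_i. Then p_m satisfies the recursion p_0 = 1 and p_m = ∑_{k=0}^{m-1} p_k · C(m,k) · r^k · (1-r)^{m-k} for m > 0. -/
open MeasureTheory Finset ProbabilityTheory
open scoped ENNReal

namespace Stmt3Aux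

/-- weight of a single geometric value (0 is impossible). -/
noncomputable def w (r : ℝ) (j : ℕ) : ℝ≥0∞ :=
  if j = 0 then 0 else ENNReal.ofReal ((1 - r) * r ^ (j - 1))

/-- gap-free predicate. -/
def GF {ι : Type*} (t : Finset ι) (a : ι → ℕ) : Prop :=
  ∀ j ∈ Finset.Icc 1 (t.sup a), ∃ i ∈ t, a i = j

open scoped Classical in
/-- probability (as a weighted sum) that a `k`-tuple is gap free. -/
noncomputable def T (r : ℝ) (k : ℕ) : ℝ≥0∞ :=
  ∑' c : Fin k → ℕ, if GF Finset.univ c then ∏ i, w r (c i) else 0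

lemma GF_iff {ι : Type*} (t : Finset ι) (a : ι → ℕ) :
    GF t a ↔ ∀ j, 1 ≤ j → (∃ i ∈ t, j ≤ a i) → (∃ i ∈ t, a i = j) := by
  constructor
  · intro h j hj ⟨i, hi, hji⟩
    exact h j (Finset.mem_Icc.mpr ⟨hj, le_trans hji (Finset.le_sup hi)⟩)
  · intro h j hj
    rw [Finset.mem_Icc] at hj
    exact h j hj.1 ((Finset.le_sup_iff (by omega : (0:ℕ) < j)).mp hj.2)

lemma GF_congr {ι ι' : Type*} {t : Finset ι} {t' : Finset ι'} {a : ι → ℕ} {a' : ι' → ℕ}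
    (h : ∀ j, (∃ i ∈ t, a i = j) ↔ (∃ i ∈ t', a' i = j)) : GF t a ↔ GF t' a' := by
  have h' : ∀ j, (∃ i ∈ t, j ≤ a i) ↔ (∃ i ∈ t', j ≤ a' i) := by
    intro j
    constructor
    · rintro ⟨i, hi, hji⟩
      obtain ⟨i', hi', e⟩ := (h (a i)).mp ⟨i, hi, rfl⟩
      exact ⟨i', hi', e ▸ hji⟩
    · rintro ⟨i, hi, hji⟩
      obtain ⟨i', hi', e⟩ := (h (a' i)).mpr ⟨i, hi, rfl⟩
      exact ⟨i', hi', e ▸ hji⟩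
  rw [GF_iff, GF_iff]
  exact forall_congr' fun j => by rw [h' j, h j]

section Meas

variable {Ω : Type*} [MeasurableSpace Ω] (μ : Measure Ω) [IsProbabilityMeasure μ]
  (r : ℝ) (Γ : ℕ → Ω → ℕ)

lemma single (hdist : ∀ i j, 1 ≤ j → μ {ω | Γ i ω = j} = ENNReal.ofReal ((1 - r) * r ^ (j - 1)))
    (hzero : ∀ i, μ {ω | Γ i ω = 0} = 0) (i j : ℕ) : μ {ω | Γ i ω = j} = w r j := by
  cases j with
  | zero => simpa [w] using hzero i
  | succ n => simpa [w] using hdist i (n + 1) (by omega)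

lemma atom (hindep : iIndepFun Γ μ)
    (hdist : ∀ i j, 1 ≤ j → μ {ω | Γ i ω = j} = ENNReal.ofReal ((1 - r) * r ^ (j - 1)))
    (hzero : ∀ i, μ {ω | Γ i ω = 0} = 0)
    (m : ℕ) (a : Fin m → ℕ) :
    μ {ω | ∀ i : Fin m, Γ i ω = a i} = ∏ i : Fin m, w r (a i) := by
  classical
  set a' : ℕ → ℕ := fun n => if h : n < m then a ⟨n, h⟩ else 0 with ha'
  have hset : {ω | ∀ i : Fin m, Γ i ω = a i} = ⋂ n ∈ Finset.range m, Γ n ⁻¹' {a' n} := by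
    ext ω
    simp only [Set.mem_setOf_eq, Set.mem_iInter, Finset.mem_range, Set.mem_preimage,
      Set.mem_singleton_iff]
    constructor
    · intro h n hn
      simp only [ha', dif_pos hn]
      exact h ⟨n, hn⟩
    · intro h i
      have := h i.1 i.2
      simpa only [ha', dif_pos i.2] using this
  rw [hset, hindep.measure_inter_preimage_eq_mul (Finset.range m)
    (sets := fun n => {a' n}) (fun i _ => measurableSet_singleton _)]
  rw [← Fin.prod_univ_eq_prod_range (fun n => μ (Γ n ⁻¹' {a' n})) m]
  refine Finset.prod_congr rfl fun i _ => ?_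
  have : Γ (i : ℕ) ⁻¹' {a' i} = {ω | Γ i ω = a' i} := rfl
  rw [this, single μ r Γ hdist hzero]
  congr 1
  simp [ha', i.2]

open scoped Classical in
lemma meas_eq (hmeas : ∀ i, Measurable (Γ i))
    (hindep : iIndepFun Γ μ)
    (hdist : ∀ i j, 1 ≤ j → μ {ω | Γ i ω = j} = ENNReal.ofReal ((1 - r) * r ^ (j - 1)))
    (hzero : ∀ i, μ {ω | Γ i ω = 0} = 0)
    (m : ℕ) (P : (Fin m → ℕ) → Prop) :
    μ {ω | P (fun i : Fin m => Γ i ω)} =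
      ∑' a : Fin m → ℕ, if P a then ∏ i, w r (a i) else 0 := by
  have hset : {ω | P (fun i : Fin m => Γ i ω)} =
      ⋃ a : {a : Fin m → ℕ // P a}, {ω | ∀ i : Fin m, Γ i ω = a.1 i} := by
    ext ω
    simp only [Set.mem_setOf_eq, Set.mem_iUnion]
    constructor
    · intro h
      exact ⟨⟨_, h⟩, fun i => rfl⟩
    · rintro ⟨⟨a, ha⟩, h⟩
      have : (fun i : Fin m => Γ i ω) = a := funext h
      rwa [this]
  have hmeasatom : ∀ a : Fin m → ℕ, MeasurableSet {ω | ∀ i : Fin m, Γ i ω = a i} := by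
    intro a
    have : {ω | ∀ i : Fin m, Γ i ω = a i} = ⋂ i : Fin m, (Γ i) ⁻¹' {a i} := by
      ext ω; simp [Set.mem_iInter]
    rw [this]
    exact MeasurableSet.iInter fun i => (hmeas i) (measurableSet_singleton _)
  rw [hset, measure_iUnion]
  · rw [show (fun a : Fin m → ℕ => if P a then ∏ i, w r (a i) else 0) =
        Set.indicator {a | P a} (fun a => ∏ i, w r (a i)) from ?_]
    · rw [← _root_.tsum_subtype]
      exact tsum_congr fun a => atom μ r Γ hindep hdist hzero m a.1
    · funext a
      simp [Set.indicator_apply]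
  · intro x y hxy
    have hne : x.1 ≠ y.1 := fun h => hxy (Subtype.ext h)
    obtain ⟨i, hi⟩ := Function.ne_iff.mp hne
    simp only [Function.onFun]
    rw [Set.disjoint_left]
    intro ω hx hy
    exact hi ((hx i).symm.trans (hy i))
  · intro a
    exact hmeasatom a.1

lemma event (hmeas : ∀ i, Measurable (Γ i))
    (hindep : iIndepFun Γ μ)
    (hdist : ∀ i j, 1 ≤ j → μ {ω | Γ i ω = j} = ENNReal.ofReal ((1 - r) * r ^ (j - 1)))
    (hzero : ∀ i, μ {ω | Γ i ω = 0} = 0) (m : ℕ) :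
    μ {ω | ∀ j ∈ Finset.Icc 1 ((Finset.range m).sup fun i => Γ i ω),
        ∃ i ∈ Finset.range m, Γ i ω = j} = T r m := by
  classical
  have hset : {ω | ∀ j ∈ Finset.Icc 1 ((Finset.range m).sup fun i => Γ i ω),
      ∃ i ∈ Finset.range m, Γ i ω = j} =
      {ω | GF Finset.univ (fun i : Fin m => Γ i ω)} := by
    ext ω
    simp only [Set.mem_setOf_eq]
    exact GF_congr (t := Finset.range m) (a := fun i => Γ i ω)
      (t' := (Finset.univ : Finset (Fin m))) (a' := fun i : Fin m => Γ i ω)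
      (fun j => by
        constructor
        · rintro ⟨i, hi, e⟩
          exact ⟨⟨i, Finset.mem_range.mp hi⟩, Finset.mem_univ _, e⟩
        · rintro ⟨i, _, e⟩
          exact ⟨i, Finset.mem_range.mpr i.2, e⟩)
  rw [hset, meas_eq μ r Γ hmeas hindep hdist hzero m (fun a => GF Finset.univ a), T]

end Meas

section Identity

variable {r : ℝ}

/-- extend a tuple on `S` (shifted by 2) by `1`'s off `S`. -/
def ext {m : ℕ} (S : Finset (Fin m)) (b : {i // i ∈ S} → ℕ) : Fin m → ℕ :=
  fun i => if h : i ∈ S then b ⟨i, h⟩ + 2 else 1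

lemma ext_pos {m : ℕ} (S : Finset (Fin m)) (b : {i // i ∈ S} → ℕ) (i : Fin m) :
    1 ≤ ext S b i := by
  unfold ext; split <;> omega

lemma ext_mem {m : ℕ} (S : Finset (Fin m)) (b : {i // i ∈ S} → ℕ) (i : Fin m) :
    2 ≤ ext S b i ↔ i ∈ S := by
  constructor
  · intro h2
    by_contra h
    unfold ext at h2
    rw [dif_neg h] at h2
    omega
  · intro h
    unfold ext
    rw [dif_pos h]
    omega

lemma ext_app {m : ℕ} (S : Finset (Fin m)) (b : {i // i ∈ S} → ℕ) (x : {i // i ∈ S}) :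
    ext S b x = b x + 2 := by
  unfold ext
  rw [dif_pos x.2]

lemma ext_inj {m : ℕ} (S : Finset (Fin m)) : Function.Injective (ext S) := by
  intro b b' h
  funext x
  have := congrFun h x
  rw [ext_app, ext_app] at this
  omega

lemma GF_ext_iff {m : ℕ} (S : Finset (Fin m)) (hS : S ≠ Finset.univ)
    (b : {i // i ∈ S} → ℕ) :
    GF Finset.univ (ext S b) ↔
      GF Finset.univ (fun j : Fin S.card => b (S.equivFin.symm j) + 1) := by
  obtain ⟨i0, hi0⟩ : ∃ i : Fin m, i ∉ S := by
    by_contra h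
    push_neg at h
    exact hS (Finset.eq_univ_iff_forall.mpr h)
  have hi0v : ext S b i0 = 1 := by unfold ext; rw [dif_neg hi0]
  rw [GF_iff, GF_iff]
  constructor
  · intro L j hj hex
    obtain ⟨j', _, hle⟩ := hex
    set x := S.equivFin.symm j' with hx
    have hax : ext S b x = b x + 2 := ext_app S b x
    obtain ⟨i, _, hi⟩ := L (j + 1) (by omega)
      ⟨x, Finset.mem_univ _, by rw [hax]; omega⟩
    have hiS : (i : Fin m) ∈ S := by
      rw [← ext_mem S b]; omega
    refine ⟨S.equivFin ⟨i, hiS⟩, Finset.mem_univ _, ?_⟩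
    have : ext S b i = b ⟨i, hiS⟩ + 2 := ext_app S b ⟨i, hiS⟩
    rw [Equiv.symm_apply_apply]
    omega
  · intro R j hj hex
    rcases Nat.lt_or_ge j 2 with hj2 | hj2
    · have : j = 1 := by omega
      exact ⟨i0, Finset.mem_univ _, by rw [hi0v, this]⟩
    · obtain ⟨i, _, hle⟩ := hex
      have hiS : i ∈ S := by rw [← ext_mem S b]; omega
      have hax : ext S b i = b ⟨i, hiS⟩ + 2 := ext_app S b ⟨i, hiS⟩
      obtain ⟨j', _, hj'⟩ := R (j - 1) (by omega)
        ⟨S.equivFin ⟨i, hiS⟩, Finset.mem_univ _, by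
          rw [Equiv.symm_apply_apply]; omega⟩
      exact ⟨(S.equivFin.symm j' : {i // i ∈ S}), Finset.mem_univ _, by
        rw [ext_app]; omega⟩

lemma GF_ext_univ {m : ℕ} (hm : 0 < m) (b : {i // i ∈ (Finset.univ : Finset (Fin m))} → ℕ) :
    ¬ GF Finset.univ (ext Finset.univ b) := by
  rw [GF_iff]
  intro h
  have h0 : (⟨0, hm⟩ : Fin m) ∈ (Finset.univ : Finset (Fin m)) := Finset.mem_univ _
  obtain ⟨i, _, hi⟩ := h 1 le_rfl
    ⟨⟨0, hm⟩, Finset.mem_univ _, ext_pos _ _ _⟩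
  have := ext_app (Finset.univ : Finset (Fin m)) b ⟨i, Finset.mem_univ _⟩
  simp only at this
  omega

lemma w_one : w r 1 = ENNReal.ofReal (1 - r) := by
  simp [w]

lemma w_succ (hr0 : 0 ≤ r) (n : ℕ) :
    w r (n + 2) = ENNReal.ofReal r * w r (n + 1) := by
  simp only [w, if_neg (by omega : ¬ n + 2 = 0), if_neg (by omega : ¬ n + 1 = 0)]
  rw [← ENNReal.ofReal_mul hr0]
  congr 1
  rw [show n + 2 - 1 = n + 1 from rfl, show n + 1 - 1 = n from rfl]
  ring

lemma w_zero : w r 0 = 0 := by simp [w]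

open scoped Classical in
lemma inner_sum (hr0 : 0 ≤ r) (m : ℕ) (S : Finset (Fin m)) (hS : S ≠ Finset.univ) :
    (∑' b : {i // i ∈ S} → ℕ,
        if GF Finset.univ (ext S b) then ∏ i, w r (ext S b i) else 0)
      = T r S.card * ENNReal.ofReal r ^ S.card *
          ENNReal.ofReal (1 - r) ^ (m - S.card) := by
  set k := S.card with hk
  set R := ENNReal.ofReal r with hR
  set W := ENNReal.ofReal (1 - r) with hW
  have hprod : ∀ b : {i // i ∈ S} → ℕ, (∏ i, w r (ext S b i))
      = R ^ k * W ^ (m - k) * ∏ x : {i // i ∈ S}, w r (b x + 1) := by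
    intro b
    rw [← Finset.prod_mul_prod_compl S (fun i => w r (ext S b i))]
    have h1 : ∏ i ∈ Sᶜ, w r (ext S b i) = W ^ (m - k) := by
      have : ∀ i ∈ Sᶜ, w r (ext S b i) = W := by
        intro i hi
        have hni : i ∉ S := Finset.mem_compl.mp hi
        have : ext S b i = 1 := by unfold ext; rw [dif_neg hni]
        rw [this, w_one]
      rw [Finset.prod_congr rfl this, Finset.prod_const, Finset.card_compl,
        Fintype.card_fin]
    have h2 : ∏ i ∈ S, w r (ext S b i)
        = R ^ k * ∏ x : {i // i ∈ S}, w r (b x + 1) := by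
      rw [← Finset.prod_coe_sort S (fun i => w r (ext S b i))]
      have : ∀ x : {i // i ∈ S}, w r (ext S b x) = R * w r (b x + 1) := by
        intro x
        rw [ext_app, w_succ hr0]
      rw [Finset.prod_congr rfl (fun x _ => this x), Finset.prod_mul_distrib,
        Finset.prod_const, Finset.card_univ, Fintype.card_coe]
    rw [h1, h2]
    ring
  have hT : T r k = ∑' b : {i // i ∈ S} → ℕ,
      if GF Finset.univ (fun j : Fin k => b (S.equivFin.symm j) + 1) then
        ∏ x : {i // i ∈ S}, w r (b x + 1) else 0 := by
    rw [T]
    have step1 : (∑' c : Fin k → ℕ, if GF Finset.univ c then ∏ i, w r (c i) else 0)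
        = ∑' c : Fin k → ℕ,
            if GF Finset.univ (fun i => c i + 1) then ∏ i, w r (c i + 1) else 0 := by
      have hginj : Function.Injective (fun (c : Fin k → ℕ) (i : Fin k) => c i + 1) := by
        intro c c' h
        funext i
        have := congrFun h i
        simp only [] at this
        omega
      refine (Function.Injective.tsum_eq hginj ?_).symm
      intro a ha
      simp only [Function.mem_support] at ha
      have hpos : ∀ i, 1 ≤ a i := by
        intro i
        by_contra hcon
        apply ha
        have hzero : a i = 0 := by omega
        split_ifs
        · exact Finset.prod_eq_zero (Finset.mem_univ i) (by rw [hzero, w_zero])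
        · rfl
      refine ⟨fun i => a i - 1, ?_⟩
      funext i
      have := hpos i
      simp only []
      omega
    rw [step1]
    rw [← (Equiv.arrowCongr S.equivFin (Equiv.refl ℕ)).tsum_eq]
    apply tsum_congr
    intro b
    have hEb : ∀ j : Fin k, (Equiv.arrowCongr S.equivFin (Equiv.refl ℕ)) b j
        = b (S.equivFin.symm j) := fun j => rfl
    have hprodeq : (∏ j : Fin k, w r ((Equiv.arrowCongr S.equivFin (Equiv.refl ℕ)) b j + 1))
        = ∏ x : {i // i ∈ S}, w r (b x + 1) := by
      simp only [hEb]
      exact Equiv.prod_comp S.equivFin.symm (fun x => w r (b x + 1))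
    simp only [hEb] at hprodeq ⊢
    rw [hprodeq]
  calc (∑' b : {i // i ∈ S} → ℕ,
        if GF Finset.univ (ext S b) then ∏ i, w r (ext S b i) else 0)
      = ∑' b : {i // i ∈ S} → ℕ, R ^ k * W ^ (m - k) *
          (if GF Finset.univ (fun j : Fin k => b (S.equivFin.symm j) + 1) then
            ∏ x : {i // i ∈ S}, w r (b x + 1) else 0) := by
        apply tsum_congr
        intro b
        rw [if_congr (GF_ext_iff S hS b) (hprod b) rfl]
        split_ifs <;> ring
    _ = R ^ k * W ^ (m - k) * T r k := by rw [ENNReal.tsum_mul_left, ← hT]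
    _ = T r k * R ^ k * W ^ (m - k) := by ring

open scoped Classical in
lemma T_rec (hr0 : 0 ≤ r) (hr1 : r ≤ 1) (m : ℕ) (hm : 0 < m) :
    T r m = ∑ k ∈ Finset.range m,
      T r k * ENNReal.ofReal r ^ k * ENNReal.ofReal (1 - r) ^ (m - k) * (m.choose k : ℝ≥0∞) := by
  set R := ENNReal.ofReal r with hR
  set W := ENNReal.ofReal (1 - r) with hW
  have step1 : T r m = ∑ S : Finset (Fin m), ∑' a : Fin m → ℕ,
      if (Finset.univ.filter fun i => 2 ≤ a i) = S ∧ (∀ i, 1 ≤ a i) then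
        (if GF Finset.univ a then ∏ i, w r (a i) else 0) else 0 := by
    rw [T, ← Summable.tsum_finsetSum (fun _ _ => ENNReal.summable)]
    apply tsum_congr
    intro a
    by_cases hpos : ∀ i, 1 ≤ a i
    · rw [Finset.sum_eq_single (Finset.univ.filter fun i => 2 ≤ a i)]
      · exact (if_pos ⟨rfl, hpos⟩).symm
      · intro S _ hne
        rw [if_neg (fun h => hne h.1.symm)]
      · intro habs
        exact absurd (Finset.mem_univ _) habs
    · push_neg at hpos
      obtain ⟨i, hi⟩ := hpos
      have hz : (if GF Finset.univ a then ∏ i, w r (a i) else 0) = 0 := by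
        split_ifs
        · exact Finset.prod_eq_zero (Finset.mem_univ i)
            (by rw [show a i = 0 by omega, w_zero])
        · rfl
      rw [hz]
      symm
      apply Finset.sum_eq_zero
      intro S _
      split_ifs with h
      · exact absurd (h.2 i) (by omega)
      · rfl
  have step2 : ∀ S : Finset (Fin m),
      (∑' a : Fin m → ℕ,
        if (Finset.univ.filter fun i => 2 ≤ a i) = S ∧ (∀ i, 1 ≤ a i) then
          (if GF Finset.univ a then ∏ i, w r (a i) else 0) else 0)
      = ∑' b : {i // i ∈ S} → ℕ,
          if GF Finset.univ (ext S b) then ∏ i, w r (ext S b i) else 0 := by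
    intro S
    rw [← Function.Injective.tsum_eq (ext_inj S) ?_]
    · apply tsum_congr
      intro b
      have hpat : (Finset.univ.filter fun i => 2 ≤ ext S b i) = S := by
        ext i
        simp [Finset.mem_filter, ext_mem]
      rw [if_pos ⟨hpat, ext_pos S b⟩]
    · intro a ha
      simp only [Function.mem_support] at ha
      have hcond : (Finset.univ.filter fun i => 2 ≤ a i) = S ∧ (∀ i, 1 ≤ a i) := by
        by_contra hcon
        exact ha (if_neg hcon)
      refine ⟨fun x => a x - 2, funext fun i => ?_⟩
      have hiff : i ∈ S ↔ 2 ≤ a i := by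
        rw [← hcond.1]
        simp [Finset.mem_filter]
      unfold ext
      by_cases h : i ∈ S
      · rw [dif_pos h]
        show a i - 2 + 2 = a i
        have := hiff.mp h
        omega
      · rw [dif_neg h]
        have h1 := hcond.2 i
        have h2 : ¬ 2 ≤ a i := fun hc => h (hiff.mpr hc)
        omega
  have step3 : T r m = ∑ S : Finset (Fin m),
      (if S = Finset.univ then 0 else T r S.card * R ^ S.card * W ^ (m - S.card)) := by
    rw [step1]
    apply Finset.sum_congr rfl
    intro S _
    rw [step2 S]
    by_cases hS : S = Finset.univ
    · subst hS
      rw [if_pos rfl]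
      have : ∀ b : {i // i ∈ (Finset.univ : Finset (Fin m))} → ℕ,
          (if GF Finset.univ (ext Finset.univ b) then
            ∏ i, w r (ext Finset.univ b i) else 0) = 0 :=
        fun b => if_neg (GF_ext_univ hm b)
      simp only [this, tsum_zero]
    · rw [if_neg hS, inner_sum hr0 m S hS]
  rw [step3]
  have hpow : (Finset.univ : Finset (Finset (Fin m))) = (Finset.univ : Finset (Fin m)).powerset :=
    (Finset.powerset_univ).symm
  rw [hpow, Finset.sum_powerset, Finset.card_univ, Fintype.card_fin,
    Finset.sum_range_succ]
  have hlast : (∑ S ∈ Finset.powersetCard m (Finset.univ : Finset (Fin m)),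
      (if S = Finset.univ then 0 else T r S.card * R ^ S.card * W ^ (m - S.card))) = 0 := by
    have : Finset.powersetCard m (Finset.univ : Finset (Fin m)) = {Finset.univ} := by
      have h := Finset.powersetCard_self (Finset.univ : Finset (Fin m))
      rwa [Finset.card_univ, Fintype.card_fin] at h
    rw [this, Finset.sum_singleton, if_pos rfl]
  rw [hlast, add_zero]
  apply Finset.sum_congr rfl
  intro k hk
  have hkm : k < m := Finset.mem_range.mp hk
  have hall : ∀ S ∈ Finset.powersetCard k (Finset.univ : Finset (Fin m)),
      (if S = Finset.univ then 0 else T r S.card * R ^ S.card * W ^ (m - S.card))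
        = T r k * R ^ k * W ^ (m - k) := by
    intro S hS
    have hcard : S.card = k := (Finset.mem_powersetCard.mp hS).2
    have hne : S ≠ Finset.univ := by
      intro h
      rw [h, Finset.card_univ, Fintype.card_fin] at hcard
      omega
    rw [if_neg hne, hcard]
  rw [Finset.sum_congr rfl hall, Finset.sum_const, Finset.card_powersetCard,
    Finset.card_univ, Fintype.card_fin, nsmul_eq_mul]
  ring

end Identity

end Stmt3Aux

/-- for i.i.d. geometric random variables `Γ i` with
`P(Γ i = j) = (1-r) r^(j-1)` for `j ≥ 1`, the probability `p m` that the first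
`m` values are gap free (contain every integer between `1` and their maximum)
satisfies `p 0 = 1` and the recursion
`p m = ∑_{k<m} p k * C(m,k) * r^k * (1-r)^(m-k)`. -/
theorem stmt3 {Ω : Type*} [MeasurableSpace Ω] (μ : Measure Ω) [IsProbabilityMeasure μ]
    (r : ℝ) (hr0 : 0 < r) (hr1 : r < 1)
    (Γ : ℕ → Ω → ℕ) (hmeas : ∀ i, Measurable (Γ i))
    (hindep : iIndepFun Γ μ)
    (hdist : ∀ i j, 1 ≤ j → μ {ω | Γ i ω = j} = ENNReal.ofReal ((1 - r) * r ^ (j - 1)))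
    (hzero : ∀ i, μ {ω | Γ i ω = 0} = 0)
    (p : ℕ → ℝ)
    (hp : ∀ m : ℕ, p m =
      (μ {ω | ∀ j ∈ Finset.Icc 1 ((Finset.range m).sup fun i => Γ i ω),
          ∃ i ∈ Finset.range m, Γ i ω = j}).toReal) :
    p 0 = 1 ∧
    ∀ m : ℕ, 0 < m →
      p m = ∑ k ∈ Finset.range m,
        p k * (m.choose k : ℝ) * r ^ k * (1 - r) ^ (m - k) := by
  have hev : ∀ k, μ {ω | ∀ j ∈ Finset.Icc 1 ((Finset.range k).sup fun i => Γ i ω),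
      ∃ i ∈ Finset.range k, Γ i ω = j} = Stmt3Aux.T r k :=
    fun k => Stmt3Aux.event μ r Γ hmeas hindep hdist hzero k
  have hpk : ∀ k, p k = (Stmt3Aux.T r k).toReal := fun k => by rw [hp k, hev k]
  have hfin : ∀ k, Stmt3Aux.T r k ≠ ⊤ := fun k => by
    rw [← hev k]; exact measure_ne_top μ _
  constructor
  · rw [hp 0]
    have h0 : {ω | ∀ j ∈ Finset.Icc 1 ((Finset.range 0).sup fun i => Γ i ω),
        ∃ i ∈ Finset.range 0, Γ i ω = j} = Set.univ := by
      ext ω; simp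
    rw [h0, measure_univ, ENNReal.toReal_one]
  · intro m hm
    have hne : ∀ k ∈ Finset.range m,
        Stmt3Aux.T r k * ENNReal.ofReal r ^ k * ENNReal.ofReal (1 - r) ^ (m - k)
          * (m.choose k : ℝ≥0∞) ≠ ⊤ := by
      intro k _
      exact ENNReal.mul_ne_top (ENNReal.mul_ne_top (ENNReal.mul_ne_top (hfin k)
        (ENNReal.pow_ne_top ENNReal.ofReal_ne_top))
        (ENNReal.pow_ne_top ENNReal.ofReal_ne_top)) (ENNReal.natCast_ne_top _)
    rw [hpk m, Stmt3Aux.T_rec hr0.le hr1.le m hm, ENNReal.toReal_sum hne]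
    apply Finset.sum_congr rfl
    intro k hk
    rw [ENNReal.toReal_mul, ENNReal.toReal_mul, ENNReal.toReal_mul,
      ENNReal.toReal_pow, ENNReal.toReal_pow, ENNReal.toReal_ofReal hr0.le,
      ENNReal.toReal_ofReal (by linarith), ENNReal.toReal_natCast, ← hpk k]
    ring
end

section
/- Let λ_j = m(1-r)r^{j-1} with 0 < r < 1 and let m_j be fixed nonnegative integers for j in a finite index set S with indices j satisfying |j - log_{1/r} m| ≤ ω(m) where ω(m) → ∞ sufficiently slowly (e.g. ω(m) = (1/4)·log_{1/r} m). Then as m → ∞, the multinomial probability m!/(∏_{j∈S} m_j! · (m - ∑ m_j)!) · ∏_{j∈S}(λ_j/m)^{m_j} · (1 - ∑_{j∈S} λ_j/m)^{m - ∑ m_j} is asymptotic to ∏_{j∈S} (λ_j^{m_j}/m_j!) · exp(-∑_{j∈S} λ_j). -/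
open Finset Filter Real Asymptotics

-- log bounds lemma
lemma aux_log_one_sub {x : ℝ} (h0 : 0 ≤ x) (h1 : x ≤ 1/2) :
    -(x + 2*x^2) ≤ Real.log (1-x) ∧ Real.log (1-x) ≤ -x := by
  have hx1 : 0 < 1 - x := by linarith
  constructor
  · rw [← Real.log_exp (-(x + 2*x^2))]
    apply Real.log_le_log (Real.exp_pos _)
    have hu : 0 ≤ x + 2*x^2 := by positivity
    have h2 : (x + 2*x^2) + 1 ≤ Real.exp (x + 2*x^2) := Real.add_one_le_exp _
    have h3 : Real.exp (-(x + 2*x^2)) = (Real.exp (x + 2*x^2))⁻¹ := Real.exp_neg _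
    rw [h3, inv_le_iff_one_le_mul₀ (Real.exp_pos _)]
    nlinarith [Real.exp_pos (x + 2*x^2)]
  · rw [← Real.log_exp (-x)]
    apply Real.log_le_log hx1
    have := Real.add_one_le_exp (-x)
    linarith

-- master tendsto
lemma aux_master (b : ℝ) (hb : 1 < b) :
    Tendsto (fun y : ℝ => (2 * Real.logb b y + 1)^2 * y ^ (-(1/2) : ℝ)) atTop (nhds 0) := by
  have hlb : 0 < Real.log b := Real.log_pos hb
  have hlog : Real.log =o[atTop] fun y : ℝ => y ^ ((1/4 : ℝ)) :=
    isLittleO_log_rpow_atTop (by norm_num)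
  have h2 : (fun y : ℝ => 2 * Real.logb b y) =o[atTop] fun y : ℝ => y ^ ((1/4 : ℝ)) := by
    have := hlog.const_mul_left (2 / Real.log b)
    refine this.congr' ?_ (Eventually.of_forall fun _ => rfl)
    filter_upwards with y
    rw [Real.logb]
    ring
  have hconst : (fun _ : ℝ => (1:ℝ)) =o[atTop] fun y : ℝ => y ^ ((1/4 : ℝ)) := by
    rw [isLittleO_const_left]
    refine Or.inr ?_
    have : Tendsto (fun y : ℝ => y ^ ((1/4:ℝ))) atTop atTop := tendsto_rpow_atTop (by norm_num)
    exact tendsto_abs_atTop_atTop.comp this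
  have hsum := h2.add hconst
  have hsq : (fun y : ℝ => (2 * Real.logb b y + 1)^2) =o[atTop] fun y : ℝ => y ^ ((1/2 : ℝ)) := by
    have := hsum.mul hsum
    refine this.congr' (Eventually.of_forall fun y => by ring) ?_
    filter_upwards [eventually_gt_atTop (0:ℝ)] with y hy
    rw [← Real.rpow_add hy]; norm_num
  have := hsq.tendsto_div_nhds_zero
  refine this.congr' ?_
  filter_upwards [eventually_gt_atTop (0:ℝ)] with y hy
  rw [Real.rpow_neg hy.le, div_eq_mul_inv]

set_option maxHeartbeats 2000000 in
/-- Poisson approximation of the multinomial probability for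
multiplicities of large values.  With `λ_j = m(1-r)r^(j-1)`, bounded fixed
multiplicities `mv j`, and index sets `S m` contained in
`|j - log_{1/r} m| ≤ (1/4)·log_{1/r} m`, the multinomial probability is
asymptotic to the product of Poisson probabilities. -/

theorem stmt5 (r : ℝ) (hr0 : 0 < r) (hr1 : r < 1)
    (S : ℕ → Finset ℕ)
    (hS : ∀ m : ℕ, ∀ j ∈ S m,
      |(j : ℝ) - Real.logb (1 / r) m| ≤ (1 / 4) * Real.logb (1 / r) m)
    (mv : ℕ → ℕ) (K : ℕ) (hmv : ∀ j, mv j ≤ K)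
    (lam : ℕ → ℕ → ℝ) (hlam : ∀ m j, lam m j = (m : ℝ) * (1 - r) * r ^ (j - 1)) :
    Tendsto
      (fun m : ℕ =>
        ((m.factorial : ℝ) /
            ((∏ j ∈ S m, ((mv j).factorial : ℝ)) *
              ((m - ∑ j ∈ S m, mv j).factorial : ℝ)) *
          (∏ j ∈ S m, (lam m j / m) ^ mv j) *
          (1 - ∑ j ∈ S m, lam m j / m) ^ (m - ∑ j ∈ S m, mv j)) /
        ((∏ j ∈ S m, lam m j ^ mv j / ((mv j).factorial : ℝ)) *
          Real.exp (-∑ j ∈ S m, lam m j)))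
      atTop (nhds 1) := by
  have hb : 1 < 1/r := one_lt_one_div hr0 hr1
  set b : ℝ := 1/r with hbdef
  set L : ℕ → ℝ := fun m => Real.logb b m with hLdef
  set M : ℕ → ℕ := fun m => ∑ j ∈ S m, mv j with hMdef
  set x : ℕ → ℝ := fun m => ∑ j ∈ S m, lam m j / m with hxdef
  set C1 : ℝ := (1 - r)/r with hC1def
  have hC1pos : 0 < C1 := div_pos (by linarith) hr0
  -- L tends to infinity
  have hLtop : Tendsto L atTop atTop :=
    (Real.tendsto_logb_atTop hb).comp tendsto_natCast_atTop_atTop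
  have EL1 : ∀ᶠ m : ℕ in atTop, 1 ≤ L m := hLtop.eventually_ge_atTop 1
  -- indices are between (3/4)L and 2L
  have Ej : ∀ᶠ m : ℕ in atTop, ∀ j ∈ S m, (3/4) * L m ≤ (j:ℝ) ∧ (j:ℝ) ≤ 2 * L m := by
    filter_upwards [EL1] with m hL1 j hj
    have := hS m j hj
    rw [abs_le] at this
    constructor <;> nlinarith [this.1, this.2]
  -- cardinality bound
  have Ecard : ∀ᶠ m : ℕ in atTop, ((S m).card : ℝ) ≤ 2 * L m + 1 := by
    filter_upwards [EL1, Ej] with m hL1 hj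
    have hsub : S m ⊆ Finset.range (⌊2 * L m⌋₊ + 1) := by
      intro j hjm
      rw [Finset.mem_range, Nat.lt_succ_iff]
      exact Nat.le_floor (hj j hjm).2
    have := Finset.card_le_card hsub
    rw [Finset.card_range] at this
    calc ((S m).card : ℝ) ≤ (⌊2 * L m⌋₊ + 1 : ℕ) := by exact_mod_cast this
      _ ≤ 2 * L m + 1 := by
          push_cast
          have := Nat.floor_le (by linarith : (0:ℝ) ≤ 2 * L m)
          linarith
  -- M bound
  have EM : ∀ᶠ m : ℕ in atTop, (M m : ℝ) ≤ K * (2 * L m + 1) := by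
    filter_upwards [Ecard] with m hc
    have h1 : M m ≤ (S m).card * K := by
      rw [hMdef]
      exact Finset.sum_le_card_nsmul _ _ K fun j _ => hmv j
    calc (M m : ℝ) ≤ ((S m).card : ℝ) * K := by exact_mod_cast h1
      _ ≤ (2 * L m + 1) * K := by
          apply mul_le_mul_of_nonneg_right hc (by positivity)
      _ = K * (2 * L m + 1) := by ring
  -- lam bounds
  have Elam : ∀ᶠ m : ℕ in atTop, ∀ j ∈ S m,
      0 < lam m j ∧ lam m j / m ≤ C1 * (m:ℝ) ^ (-(3/4) : ℝ) := by
    filter_upwards [EL1, Ej, eventually_ge_atTop 1] with m hL1 hj hm1 j hjm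
    have hm0 : (0:ℝ) < m := by exact_mod_cast hm1
    have hpos : 0 < lam m j := by
      rw [hlam]
      have h1 : (0:ℝ) < r ^ (j-1) := pow_pos hr0 _
      have h2 : (0:ℝ) < 1 - r := by linarith
      positivity
    refine ⟨hpos, ?_⟩
    have hj34 : (3/4) * L m ≤ (j:ℝ) := (hj j hjm).1
    -- r ^ (j-1) ≤ r⁻¹ * m ^ (-3/4)
    have hlb : (0:ℝ) < Real.log b := Real.log_pos hb
    have key : r ^ (j - 1 : ℕ) ≤ r⁻¹ * (m:ℝ) ^ (-(3/4) : ℝ) := by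
      have hj1 : 1 ≤ j := by
        have h0 : (0:ℝ) < (j:ℝ) := by linarith
        exact_mod_cast Nat.cast_pos.mp h0
      have hcast : ((j - 1 : ℕ) : ℝ) = (j:ℝ) - 1 := by
        push_cast [Nat.cast_sub hj1]; ring
      have h1 : r ^ (j - 1 : ℕ) = r ^ (((j - 1 : ℕ) : ℝ)) := (Real.rpow_natCast r _).symm
      rw [h1, hcast]
      have h2 : r ^ ((j:ℝ) - 1) ≤ r ^ ((3/4) * L m - 1) :=
        Real.rpow_le_rpow_of_exponent_ge hr0 hr1.le (by linarith)
      refine h2.trans ?_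
      have h4 : r ^ ((3/4) * L m - 1) = r⁻¹ * r ^ ((3/4) * L m) := by
        rw [Real.rpow_sub hr0, Real.rpow_one]; ring
      rw [h4]
      have h3 : r ^ ((3/4) * L m) = (m:ℝ) ^ (-(3/4):ℝ) := by
        rw [Real.rpow_def_of_pos hr0, Real.rpow_def_of_pos hm0]
        congr 1
        have hlogr : Real.log r = - Real.log b := by
          rw [hbdef, one_div, Real.log_inv]; ring
        rw [hLdef]
        simp only [Real.logb]
        rw [hlogr]
        field_simp
      rw [h3]
    rw [hlam]
    have : (m:ℝ) * (1 - r) * r ^ (j-1) / m = (1 - r) * r ^ (j-1) := by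
      field_simp
    rw [this, hC1def]
    calc (1 - r) * r ^ (j-1) ≤ (1 - r) * (r⁻¹ * (m:ℝ) ^ (-(3/4):ℝ)) := by
          apply mul_le_mul_of_nonneg_left key (by linarith)
      _ = (1 - r)/r * (m:ℝ) ^ (-(3/4):ℝ) := by ring
  -- x bounds
  have Ex : ∀ᶠ m : ℕ in atTop, 0 ≤ x m ∧ x m ≤ (2*L m + 1) * (C1 * (m:ℝ) ^ (-(3/4):ℝ)) := by
    filter_upwards [Elam, Ecard, eventually_ge_atTop 1] with m hl hc hm1
    have hm0 : (0:ℝ) < m := by exact_mod_cast hm1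
    constructor
    · rw [hxdef]
      apply Finset.sum_nonneg
      intro j hj
      exact div_nonneg (hl j hj).1.le hm0.le
    · rw [hxdef]
      calc ∑ j ∈ S m, lam m j / m ≤ (S m).card • (C1 * (m:ℝ)^(-(3/4):ℝ)) :=
            Finset.sum_le_card_nsmul _ _ _ (fun j hj => (hl j hj).2)
        _ = ((S m).card : ℝ) * (C1 * (m:ℝ)^(-(3/4):ℝ)) := by rw [nsmul_eq_mul]
        _ ≤ (2*L m + 1) * (C1 * (m:ℝ)^(-(3/4):ℝ)) := by
            apply mul_le_mul_of_nonneg_right hc (by positivity)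
  -- master sequence D
  set D : ℕ → ℝ := fun m => (2*L m + 1)^2 * (m:ℝ)^(-(1/2):ℝ) with hDdef
  have hD : Tendsto D atTop (nhds 0) := (aux_master b hb).comp tendsto_natCast_atTop_atTop
  have hDconst : ∀ c : ℝ, Tendsto (fun m => c * D m) atTop (nhds 0) := by
    intro c
    have h := hD.const_mul c
    rw [mul_zero] at h
    exact h
  have Erp : ∀ᶠ m : ℕ in atTop,
      (m:ℝ)^(-(3/4):ℝ) ≤ (m:ℝ)^(-(1/2):ℝ) ∧ ((m:ℝ))⁻¹ ≤ (m:ℝ)^(-(1/2):ℝ) := by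
    filter_upwards [eventually_ge_atTop 1] with m hm1
    have hm1' : (1:ℝ) ≤ m := by exact_mod_cast hm1
    constructor
    · exact Real.rpow_le_rpow_of_exponent_le hm1' (by norm_num)
    · rw [← Real.rpow_neg_one]
      exact Real.rpow_le_rpow_of_exponent_le hm1' (by norm_num)
  clear_value L M x C1 D
  -- the five key bounds
  have Ebounds : ∀ᶠ m : ℕ in atTop,
      x m ≤ C1 * D m ∧ (M m : ℝ) * x m ≤ (K * C1) * D m ∧
      (m : ℝ) * (x m)^2 ≤ C1^2 * D m ∧ (M m : ℝ)/m ≤ K * D m ∧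
      (M m : ℝ) * ((M m : ℝ)/m) ≤ (K^2 : ℝ) * D m := by
    filter_upwards [EL1, EM, Ex, Erp, eventually_ge_atTop 1] with m hL1 hM hx' hrp hm1
    have hm0 : (0:ℝ) < m := by exact_mod_cast hm1
    simp only [hDdef]
    set A : ℝ := 2*L m + 1 with hAdef
    have hA1 : (1:ℝ) ≤ A := by rw [hAdef]; linarith
    have hA0 : (0:ℝ) ≤ A := by linarith
    set p : ℝ := (m:ℝ)^(-(3/4):ℝ) with hpdef
    set q : ℝ := (m:ℝ)^(-(1/2):ℝ) with hqdef
    have hp0 : 0 ≤ p := Real.rpow_nonneg hm0.le _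
    have hq0 : 0 ≤ q := Real.rpow_nonneg hm0.le _
    have hmp2 : (m:ℝ) * p^2 = q := by
      rw [hpdef, hqdef, sq, ← Real.rpow_add hm0]
      nth_rewrite 1 [← Real.rpow_one (m:ℝ)]
      rw [← Real.rpow_add hm0]
      norm_num
    have hpq : p ≤ q := hrp.1
    have hinvq : ((m:ℝ))⁻¹ ≤ q := hrp.2
    have hx0 : 0 ≤ x m := hx'.1
    have hxb : x m ≤ A * (C1 * p) := hx'.2
    have hM0 : (0:ℝ) ≤ M m := Nat.cast_nonneg _
    have hK0 : (0:ℝ) ≤ K := Nat.cast_nonneg _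
    have hMb : (M m : ℝ) ≤ K * A := hM
    have hminv : (0:ℝ) ≤ (m:ℝ)⁻¹ := by positivity
    clear_value A p q
    have hAA : A ≤ A^2 := by nlinarith
    have hxb2 : x m ≤ A^2 * (C1 * q) := by
      refine hxb.trans ?_
      exact mul_le_mul hAA (mul_le_mul_of_nonneg_left hpq hC1pos.le) (by positivity) (by positivity)
    refine ⟨?_, ?_, ?_, ?_, ?_⟩
    · nlinarith
    · have h1 : (M m : ℝ) * x m ≤ (K * A) * (A * (C1 * p)) :=
        mul_le_mul hMb hxb hx0 (by positivity)
      have h2 : (K:ℝ)*C1*A^2*p ≤ (K:ℝ)*C1*A^2*q :=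
        mul_le_mul_of_nonneg_left hpq (by positivity)
      nlinarith [h1, h2]
    · have h1 : (x m)^2 ≤ (A * (C1 * p))^2 := by nlinarith
      have h2 : (m:ℝ) * (x m)^2 ≤ (m:ℝ) * (A * (C1 * p))^2 := by nlinarith
      have h3 : (m:ℝ) * (A * (C1 * p))^2 = A^2 * C1^2 * ((m:ℝ) * p^2) := by ring
      rw [h3, hmp2] at h2
      nlinarith
    · have h1 : (M m : ℝ)/m ≤ (K * A) * (m:ℝ)⁻¹ := by
        rw [div_eq_mul_inv]
        exact mul_le_mul_of_nonneg_right hMb hminv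
      have h2 : (K * A : ℝ) * (m:ℝ)⁻¹ ≤ (K * A) * q :=
        mul_le_mul_of_nonneg_left hinvq (by positivity)
      nlinarith [mul_le_mul_of_nonneg_left hAA (mul_nonneg hK0 hq0)]
    · have h1 : (M m : ℝ)/m ≤ (K * A) * (m:ℝ)⁻¹ := by
        rw [div_eq_mul_inv]
        exact mul_le_mul_of_nonneg_right hMb hminv
      have h0 : (0:ℝ) ≤ (M m : ℝ)/m := by positivity
      have h2 : (M m : ℝ) * ((M m:ℝ)/m) ≤ (K*A) * ((K*A) * (m:ℝ)⁻¹) :=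
        mul_le_mul hMb h1 h0 (by positivity)
      have h3 : (K*A:ℝ) * ((K*A) * (m:ℝ)⁻¹) ≤ (K*A) * ((K*A) * q) :=
        mul_le_mul_of_nonneg_left (mul_le_mul_of_nonneg_left hinvq (by positivity)) (by positivity)
      nlinarith
  -- derived limits
  have tx : Tendsto x atTop (nhds 0) := by
    apply squeeze_zero_norm' ?_ (hDconst C1)
    filter_upwards [Ebounds, Ex] with m hb' hx'
    rw [Real.norm_eq_abs, abs_of_nonneg hx'.1]
    exact hb'.1
  have tMx : Tendsto (fun m => (M m : ℝ) * x m) atTop (nhds 0) := by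
    apply squeeze_zero_norm' ?_ (hDconst (K * C1))
    filter_upwards [Ebounds, Ex] with m hb' hx'
    rw [Real.norm_eq_abs, abs_of_nonneg (mul_nonneg (Nat.cast_nonneg _) hx'.1)]
    exact hb'.2.1
  have tmx2 : Tendsto (fun m : ℕ => (m:ℝ) * (x m)^2) atTop (nhds 0) := by
    apply squeeze_zero_norm' ?_ (hDconst (C1^2))
    filter_upwards [Ebounds] with m hb'
    rw [Real.norm_eq_abs, abs_of_nonneg (by positivity)]
    exact hb'.2.2.1
  have tMm : Tendsto (fun m => (M m : ℝ)/m) atTop (nhds 0) := by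
    apply squeeze_zero_norm' ?_ (hDconst K)
    filter_upwards [Ebounds] with m hb'
    rw [Real.norm_eq_abs, abs_of_nonneg (by positivity)]
    exact hb'.2.2.2.1
  have tM2m : Tendsto (fun m => (M m : ℝ) * ((M m:ℝ)/m)) atTop (nhds 0) := by
    apply squeeze_zero_norm' ?_ (hDconst (K^2))
    filter_upwards [Ebounds] with m hb'
    rw [Real.norm_eq_abs, abs_of_nonneg (by positivity)]
    exact hb'.2.2.2.2
  -- smallness
  have Esmall : ∀ᶠ m : ℕ in atTop, M m ≤ m ∧ x m ≤ 1/2 ∧ (M m : ℝ)/m ≤ 1/2 := by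
    have h1 := tMm.eventually (eventually_le_nhds (by norm_num : (0:ℝ) < 1/2))
    have h2 := tx.eventually (eventually_le_nhds (by norm_num : (0:ℝ) < 1/2))
    filter_upwards [h1, h2, eventually_ge_atTop 1] with m hMm hxm hm1
    have hm0 : (0:ℝ) < m := by exact_mod_cast hm1
    refine ⟨?_, hxm, hMm⟩
    have h3 : (M m : ℝ) ≤ m := by
      rw [div_le_iff₀ hm0] at hMm; nlinarith
    exact_mod_cast h3
  -- F1 and its limit
  set F1 : ℕ → ℝ := fun m => ∏ i ∈ Finset.range (M m), (1 - (i:ℝ)/m) with hF1def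
  have tlowexp : Tendsto (fun m => (M m:ℝ) * Real.log (1 - (M m:ℝ)/m)) atTop (nhds 0) := by
    have tg : Tendsto (fun m => 2 * ((M m:ℝ) * ((M m:ℝ)/m))) atTop (nhds 0) := by
      have h := tM2m.const_mul 2
      rw [mul_zero] at h
      exact h
    apply squeeze_zero_norm' ?_ tg
    filter_upwards [Esmall] with m hsm
    have hm0' : (0:ℝ) ≤ (M m:ℝ)/m := by positivity
    obtain ⟨hlb, hub⟩ := aux_log_one_sub hm0' hsm.2.2
    have hM0 : (0:ℝ) ≤ (M m : ℝ) := Nat.cast_nonneg _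
    rw [Real.norm_eq_abs, abs_mul, abs_of_nonneg hM0]
    set t : ℝ := (M m:ℝ)/m
    have habs : |Real.log (1 - t)| ≤ t + 2*t^2 := by
      rw [abs_le]; constructor <;> nlinarith
    have ht2 : t + 2*t^2 ≤ 2*t := by nlinarith [hsm.2.2]
    calc (M m:ℝ) * |Real.log (1-t)| ≤ (M m:ℝ) * (2*t) := by
          apply mul_le_mul_of_nonneg_left (habs.trans ht2) hM0
      _ = 2 * ((M m:ℝ) * t) := by ring
  have tlow : Tendsto (fun m => (1 - (M m:ℝ)/m) ^ (M m)) atTop (nhds 1) := by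
    have h := (Real.continuous_exp.tendsto' 0 1 Real.exp_zero).comp tlowexp
    apply h.congr'
    filter_upwards [Esmall] with m hsm
    have hx1 : 0 < 1 - (M m:ℝ)/m := by linarith [hsm.2.2]
    simp only [Function.comp]
    rw [Real.exp_nat_mul, Real.exp_log hx1]
  have T1 : Tendsto F1 atTop (nhds 1) := by
    apply tendsto_of_tendsto_of_tendsto_of_le_of_le' tlow tendsto_const_nhds
    · filter_upwards [Esmall, eventually_ge_atTop 1] with m hsm hm1
      have hm0 : (0:ℝ) < m := by exact_mod_cast hm1
      rw [hF1def]
      have hcard : (1 - (M m:ℝ)/m) ^ (M m) = ∏ _i ∈ Finset.range (M m), (1 - (M m:ℝ)/m) := by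
        rw [Finset.prod_const, Finset.card_range]
      rw [hcard]
      apply Finset.prod_le_prod
      · intro i _; linarith [hsm.2.2]
      · intro i hi
        have hi' : (i:ℝ) ≤ (M m:ℝ) := by
          exact_mod_cast (Finset.mem_range.mp hi).le
        have : (i:ℝ)/m ≤ (M m:ℝ)/m := by gcongr
        linarith
    · filter_upwards [Esmall, eventually_ge_atTop 1] with m hsm hm1
      have hm0 : (0:ℝ) < m := by exact_mod_cast hm1
      rw [hF1def]
      apply Finset.prod_le_one
      · intro i hi
        have hi' : (i:ℝ) ≤ (M m:ℝ) := by
          exact_mod_cast (Finset.mem_range.mp hi).le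
        have : (i:ℝ)/m ≤ (M m:ℝ)/m := by gcongr
        linarith [hsm.2.2]
      · intro i _
        have : (0:ℝ) ≤ (i:ℝ)/m := by positivity
        linarith
  -- exponential part
  have th2 : Tendsto (fun m => ((m - M m : ℕ):ℝ) * Real.log (1 - x m) + (m:ℝ) * x m)
      atTop (nhds 0) := by
    have tg : Tendsto (fun m : ℕ => 2*((m:ℝ)*(x m)^2) + 2*((M m:ℝ) * x m)) atTop (nhds 0) := by
      have h := (tmx2.const_mul 2).add (tMx.const_mul 2)
      simp only [mul_zero, add_zero] at h
      exact h
    apply squeeze_zero_norm' ?_ tg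
    filter_upwards [Esmall, Ex, eventually_ge_atTop 1] with m hsm hx' hm1
    have hm0 : (0:ℝ) < m := by exact_mod_cast hm1
    have hMle : (M m : ℝ) ≤ m := by exact_mod_cast hsm.1
    rw [Nat.cast_sub hsm.1]
    set X : ℝ := x m with hXdef
    have hX0 : 0 ≤ X := hx'.1
    obtain ⟨hlb, hub⟩ := aux_log_one_sub hX0 hsm.2.1
    set lg : ℝ := Real.log (1 - X) with hlgdef
    have hmo : (0:ℝ) ≤ (m:ℝ) - M m := by linarith
    have hub' : ((m:ℝ) - M m) * lg ≤ ((m:ℝ) - M m) * (-X) :=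
      mul_le_mul_of_nonneg_left hub hmo
    have hlb' : ((m:ℝ) - M m) * (-(X + 2*X^2)) ≤ ((m:ℝ) - M m) * lg :=
      mul_le_mul_of_nonneg_left hlb hmo
    have hM0 : (0:ℝ) ≤ (M m:ℝ) := Nat.cast_nonneg _
    rw [Real.norm_eq_abs, abs_le]
    constructor <;>
      nlinarith [mul_nonneg hM0 hX0, mul_nonneg hM0 (sq_nonneg X),
        mul_nonneg hm0.le (sq_nonneg X)]
  have T2 : Tendsto (fun m => Real.exp (((m - M m : ℕ):ℝ) * Real.log (1 - x m) + (m:ℝ) * x m))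
      atTop (nhds 1) :=
    (Real.continuous_exp.tendsto' 0 1 Real.exp_zero).comp th2
  -- assemble
  have Tfin : Tendsto (fun m => F1 m *
      Real.exp (((m - M m : ℕ):ℝ) * Real.log (1 - x m) + (m:ℝ) * x m)) atTop (nhds 1) := by
    have h := T1.mul T2
    rw [mul_one] at h
    exact h
  apply Tendsto.congr' ?_ Tfin
  filter_upwards [Esmall, Elam, Ex, eventually_ge_atTop 1] with m hsm hlam' hx' hm1
  have hm0 : (0:ℝ) < m := by exact_mod_cast hm1
  have hMle : M m ≤ m := hsm.1
  have hx1 : 0 < 1 - x m := by linarith [hsm.2.1]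
  have hxm : ∑ j ∈ S m, lam m j / (m:ℝ) = x m := by rw [hxdef]
  have hMm' : ∑ j ∈ S m, mv j = M m := by rw [hMdef]
  have hsum : ∑ j ∈ S m, lam m j = (m:ℝ) * x m := by
    rw [hxdef, Finset.mul_sum]
    apply Finset.sum_congr rfl
    intro j hj
    rw [mul_comm, div_mul_cancel₀ _ hm0.ne']
  have hA : ∏ j ∈ S m, (lam m j / m) ^ mv j
      = (∏ j ∈ S m, lam m j ^ mv j) * ((m:ℝ) ^ (M m))⁻¹ := by
    simp only [div_pow]
    rw [Finset.prod_div_distrib, Finset.prod_pow_eq_pow_sum, div_eq_mul_inv, hMdef]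
  have hC : ∏ j ∈ S m, lam m j ^ mv j / ((mv j).factorial : ℝ)
      = (∏ j ∈ S m, lam m j ^ mv j) / (∏ j ∈ S m, ((mv j).factorial : ℝ)) :=
    Finset.prod_div_distrib _ _
  have hG0 : 0 < ∏ j ∈ S m, lam m j ^ mv j :=
    Finset.prod_pos fun j hj => pow_pos (hlam' j hj).1 _
  have hP0 : 0 < ∏ j ∈ S m, ((mv j).factorial : ℝ) :=
    Finset.prod_pos fun j _ => by exact_mod_cast (mv j).factorial_pos
  have hfact : (m.factorial : ℝ)
      = ((m - M m).factorial : ℝ) * (m.descFactorial (M m) : ℝ) := by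
    rw [← Nat.cast_mul, Nat.factorial_mul_descFactorial hMle]
  have hdesc : (m.descFactorial (M m) : ℝ) = F1 m * (m:ℝ)^(M m) := by
    calc (m.descFactorial (M m) : ℝ) = ∏ i ∈ Finset.range (M m), ((m:ℝ) - i) := by
          rw [Nat.descFactorial_eq_prod_range, Nat.cast_prod]
          apply Finset.prod_congr rfl
          intro i hi
          have : i ≤ m := le_trans (Finset.mem_range.mp hi).le hMle
          rw [Nat.cast_sub this]
      _ = ∏ i ∈ Finset.range (M m), ((1 - (i:ℝ)/m) * m) := by
          apply Finset.prod_congr rfl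
          intro i _
          field_simp
      _ = F1 m * (m:ℝ)^(M m) := by
          rw [Finset.prod_mul_distrib, Finset.prod_const, Finset.card_range, hF1def]
  have hexp1 : (1 - x m)^(m - M m) = Real.exp (((m - M m : ℕ):ℝ) * Real.log (1 - x m)) := by
    rw [Real.exp_nat_mul, Real.exp_log hx1]
  rw [hMm', hxm, hexp1, hfact, hdesc, hA, hC, hsum, Real.exp_neg, Real.exp_add]
  have hQ0 : (0:ℝ) < ((m - M m).factorial : ℝ) := by exact_mod_cast (m - M m).factorial_pos
  have hpm : (0:ℝ) < (m:ℝ)^(M m) := pow_pos hm0 _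
  field_simp
end

section
/- Let 0 < r < 1 and for real x > 0 define f(x) = ∑_{j≥0} (1 - exp(-x r^j)). Then f(x) is finite for every x > 0, and f(x) - log_{1/r}(x) is bounded as x → ∞. -/
open Real Filter Finset

private lemma stmt6_term_bounds (a : ℝ) (ha : 0 ≤ a) :
    0 ≤ 1 - Real.exp (-a) ∧ 1 - Real.exp (-a) ≤ a := by
  constructor
  · have : Real.exp (-a) ≤ 1 := Real.exp_le_one_iff.mpr (by linarith)
    linarith
  · have := Real.add_one_le_exp (-a)
    linarith

set_option maxHeartbeats 1000000 in
/-- for `0 < r < 1`, `f(x) = ∑_{j≥0} (1 - exp(-x r^j))` is finite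
for every `x > 0`, and `f(x) - log_{1/r} x` is bounded as `x → ∞`. -/
theorem stmt6 (r : ℝ) (hr0 : 0 < r) (hr1 : r < 1) :
    (∀ x : ℝ, 0 < x → Summable (fun j : ℕ => 1 - Real.exp (-(x * r ^ j)))) ∧
    ∃ C M : ℝ, ∀ x : ℝ, M ≤ x →
      |(∑' j : ℕ, (1 - Real.exp (-(x * r ^ j)))) - Real.logb (1 / r) x| ≤ C := by
  have hsum : ∀ x : ℝ, 0 < x → Summable (fun j : ℕ => 1 - Real.exp (-(x * r ^ j))) := by
    intro x hx
    refine Summable.of_nonneg_of_le (fun j => ?_) (fun j => ?_)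
      ((summable_geometric_of_lt_one hr0.le hr1).mul_left x)
    · exact (stmt6_term_bounds _ (by positivity)).1
    · exact (stmt6_term_bounds _ (by positivity)).2
  refine ⟨hsum, ?_⟩
  set b : ℝ := 1 / r with hbdef
  have hb : 1 < b := by rw [hbdef, lt_div_iff₀ hr0]; linarith
  have hbr : b * r = 1 := by rw [hbdef]; field_simp
  set q : ℝ := Real.exp (-(b - 1)) with hqdef
  have hq0 : 0 < q := Real.exp_pos _
  have hq1 : q < 1 := by
    rw [hqdef]
    calc Real.exp (-(b - 1)) < Real.exp 0 := Real.exp_lt_exp.mpr (by linarith)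
      _ = 1 := Real.exp_zero
  have h1r : 0 < 1 - r := by linarith
  refine ⟨b * (1 - r)⁻¹ + ((1 - q)⁻¹ + 1), 1, fun x hx => ?_⟩
  have hx0 : 0 < x := by linarith
  set L := Real.logb b x with hLdef
  have hL0 : 0 ≤ L := Real.logb_nonneg hb hx
  set N := ⌊L⌋₊ with hNdef
  have hNL : (N : ℝ) ≤ L := Nat.floor_le hL0
  have hLN : L < N + 1 := Nat.lt_floor_add_one L
  have hxb : x = b ^ L := (Real.rpow_logb (by linarith) (by linarith) hx0).symm
  -- key upper estimate : x * r ^ N ≤ b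
  have key2 : x * r ^ N ≤ b := by
    have h1 : x ≤ b ^ (N + 1 : ℕ) := by
      rw [hxb, ← Real.rpow_natCast b (N + 1)]
      exact (Real.rpow_le_rpow_left_iff hb).mpr (by push_cast; linarith)
    have h2 : (b : ℝ) ^ (N + 1 : ℕ) * r ^ N = b := by
      rw [pow_succ, mul_comm (b ^ N) b, mul_assoc, ← mul_pow, hbr, one_pow, mul_one]
    calc x * r ^ N ≤ b ^ (N + 1 : ℕ) * r ^ N :=
          mul_le_mul_of_nonneg_right h1 (by positivity)
      _ = b := h2
  -- key lower estimate : for j < N, b ^ (N - j) ≤ x * r ^ j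
  have key1 : ∀ j : ℕ, j < N → (b : ℝ) ^ (N - j) ≤ x * r ^ j := by
    intro j hj
    have h1 : (b : ℝ) ^ (N : ℕ) ≤ x := by
      rw [hxb, ← Real.rpow_natCast b N]
      exact (Real.rpow_le_rpow_left_iff hb).mpr hNL
    have h2 : (b : ℝ) ^ (N : ℕ) * r ^ j = b ^ (N - j) := by
      have hNj : (N : ℕ) = (N - j) + j := by omega
      conv_lhs => rw [hNj]
      rw [pow_add, mul_assoc, ← mul_pow, hbr, one_pow, mul_one]
    calc (b : ℝ) ^ (N - j) = b ^ (N : ℕ) * r ^ j := h2.symm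
      _ ≤ x * r ^ j := mul_le_mul_of_nonneg_right h1 (by positivity)
  have hS := hsum x hx0
  have hsplit := Summable.sum_add_tsum_nat_add (f := fun j : ℕ => 1 - Real.exp (-(x * r ^ j))) N hS
  -- tail bounds
  have htail_nonneg : 0 ≤ ∑' i : ℕ, (1 - Real.exp (-(x * r ^ (i + N)))) :=
    tsum_nonneg fun i => (stmt6_term_bounds _ (by positivity)).1
  have htail_le : (∑' i : ℕ, (1 - Real.exp (-(x * r ^ (i + N))))) ≤ b * (1 - r)⁻¹ := by
    have hgeo : Summable (fun i : ℕ => (x * r ^ N) * r ^ i) :=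
      (summable_geometric_of_lt_one hr0.le hr1).mul_left _
    have hle : ∀ i : ℕ, (1 - Real.exp (-(x * r ^ (i + N)))) ≤ (x * r ^ N) * r ^ i := by
      intro i
      have := (stmt6_term_bounds (x * r ^ (i + N)) (by positivity)).2
      calc 1 - Real.exp (-(x * r ^ (i + N))) ≤ x * r ^ (i + N) := this
        _ = (x * r ^ N) * r ^ i := by rw [pow_add]; ring
    calc (∑' i : ℕ, (1 - Real.exp (-(x * r ^ (i + N)))))
        ≤ ∑' i : ℕ, (x * r ^ N) * r ^ i := by
          refine Summable.tsum_le_tsum hle ?_ hgeo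
          exact (summable_nat_add_iff N).mpr hS
      _ = (x * r ^ N) * (1 - r)⁻¹ := by
          rw [tsum_mul_left, tsum_geometric_of_lt_one hr0.le hr1]
      _ ≤ b * (1 - r)⁻¹ := mul_le_mul_of_nonneg_right key2 (by positivity)
  -- head bounds
  have hhead_le : (∑ j ∈ range N, (1 - Real.exp (-(x * r ^ j)))) ≤ N := by
    calc (∑ j ∈ range N, (1 - Real.exp (-(x * r ^ j)))) ≤ ∑ _j ∈ range N, (1 : ℝ) := by
          refine Finset.sum_le_sum fun j _ => ?_
          have := Real.exp_pos (-(x * r ^ j))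
          linarith
      _ = N := by simp
  have hhead_ge : (N : ℝ) - (1 - q)⁻¹ ≤ ∑ j ∈ range N, (1 - Real.exp (-(x * r ^ j))) := by
    have hE : (∑ j ∈ range N, Real.exp (-(x * r ^ j))) ≤ (1 - q)⁻¹ := by
      have step1 : (∑ j ∈ range N, Real.exp (-(x * r ^ j))) ≤ ∑ j ∈ range N, q ^ (N - j) := by
        refine Finset.sum_le_sum fun j hj => ?_
        have hjN := Finset.mem_range.mp hj
        have hbern : ((N - j : ℕ) : ℝ) * (b - 1) ≤ b ^ (N - j) := by
          have := one_add_mul_le_pow (a := b - 1) (by linarith) (N - j)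
          have h' : (1 : ℝ) + (N - j : ℕ) * (b - 1) ≤ b ^ (N - j) := by
            simpa using this
          linarith
        have h1 : Real.exp (-(x * r ^ j)) ≤ Real.exp (-(((N - j : ℕ) : ℝ) * (b - 1))) := by
          apply Real.exp_le_exp.mpr
          have := key1 j hjN
          have : ((N - j : ℕ) : ℝ) * (b - 1) ≤ x * r ^ j := le_trans hbern this
          linarith
        have h2 : Real.exp (-(((N - j : ℕ) : ℝ) * (b - 1))) = q ^ (N - j) := by
          rw [hqdef, ← Real.exp_nat_mul]
          congr 1
          ring
        linarith [h1, h2.le, h2.ge]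
      have step2 : (∑ j ∈ range N, q ^ (N - j)) = ∑ j ∈ range N, q ^ (j + 1) := by
        rw [← Finset.sum_range_reflect]
        refine Finset.sum_congr rfl fun j hj => ?_
        have := Finset.mem_range.mp hj
        congr 1
        omega
      have step3 : (∑ j ∈ range N, q ^ (j + 1)) ≤ ∑ j ∈ range N, q ^ j := by
        refine Finset.sum_le_sum fun j _ => ?_
        exact pow_le_pow_of_le_one hq0.le hq1.le (Nat.le_succ j)
      have step4 : (∑ j ∈ range N, q ^ j) ≤ (1 - q)⁻¹ := by
        have := Summable.sum_le_tsum (range N) (fun i _ => pow_nonneg hq0.le i)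
          (summable_geometric_of_lt_one hq0.le hq1)
        rwa [tsum_geometric_of_lt_one hq0.le hq1] at this
      linarith
    have : (∑ j ∈ range N, (1 - Real.exp (-(x * r ^ j))))
        = (N : ℝ) - ∑ j ∈ range N, Real.exp (-(x * r ^ j)) := by
      rw [Finset.sum_sub_distrib]
      simp
    linarith
  -- combine
  rw [abs_le]
  have hbnn : 0 ≤ b * (1 - r)⁻¹ := mul_nonneg (by linarith) (inv_nonneg.mpr (by linarith))
  have hqnn : 0 ≤ (1 - q)⁻¹ := inv_nonneg.mpr (by linarith)
  constructor
  · -- lower bound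
    have : (N : ℝ) - (1 - q)⁻¹ ≤ ∑' j : ℕ, (1 - Real.exp (-(x * r ^ j))) := by
      rw [← hsplit]; linarith
    linarith
  · -- upper bound
    have : (∑' j : ℕ, (1 - Real.exp (-(x * r ^ j)))) ≤ (N : ℝ) + b * (1 - r)⁻¹ := by
      rw [← hsplit]; linarith
    linarith
end

section
/- Let 0 < r < 1, let C > 0, and define T_k(m) = exp(-m r^k) · ∏_{j=k^-}^{k} (1 - exp(-m(1-r)r^{j-1})) for real m > 0, where k^- = ⌊log_{1/r} m - ω(m)⌋ and k is an integer with k^- ≤ k ≤ ⌊log_{1/r} m + ω(m)⌋. Then |T_k'(m)| ≤ r^{k^-} + (k - k^- + 1)/m for all sufficiently large m. -/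
open Real Filter Finset

/-- derivative bound for the terms
`T_k(m) = exp(-m r^k) ∏_{j=k⁻}^{k} (1 - exp(-m(1-r)r^(j-1)))` of the gap-free
sum: for all sufficiently large `m` (with `k⁻ = ⌊log_{1/r} m - ω(m)⌋` and
`k⁻ ≤ k ≤ ⌊log_{1/r} m + ω(m)⌋`), `|T_k'(m)| ≤ r^(k⁻) + (k - k⁻ + 1)/m`. -/
theorem stmt7 (r : ℝ) (hr0 : 0 < r) (hr1 : r < 1)
    (ω : ℝ → ℝ) (hω : Tendsto ω atTop atTop) (k kminus : ℤ) :
    ∃ M : ℝ, ∀ m : ℝ, M ≤ m →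
      kminus = ⌊Real.logb (1 / r) m - ω m⌋ →
      kminus ≤ k → k ≤ ⌊Real.logb (1 / r) m + ω m⌋ →
      |deriv (fun x : ℝ =>
          Real.exp (-(x * r ^ k)) *
            ∏ j ∈ Finset.Icc kminus k,
              (1 - Real.exp (-(x * (1 - r) * r ^ (j - 1))))) m| ≤
        r ^ kminus + ((k - kminus + 1 : ℤ) : ℝ) / m := by
  refine ⟨1, fun m hm _ hkk _ => ?_⟩
  have hm0 : (0:ℝ) < m := lt_of_lt_of_le one_pos hm
  set S := Finset.Icc kminus k
  set g : ℤ → ℝ → ℝ := fun j x => 1 - Real.exp (-(x * (1 - r) * r ^ (j - 1)))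
  set c : ℤ → ℝ := fun j => (1 - r) * r ^ (j - 1) with hc
  have hcpos : ∀ j : ℤ, 0 < c j := fun j =>
    mul_pos (by linarith) (zpow_pos hr0 _)
  set dg : ℤ → ℝ := fun j => c j * Real.exp (-(m * c j)) with hdg
  have hgd : ∀ j : ℤ, HasDerivAt (g j) (dg j) m := by
    intro j
    have h1 : HasDerivAt (fun x : ℝ => x * (1 - r) * r ^ (j - 1)) (c j) m := by
      simpa [hc, mul_comm, mul_assoc, mul_left_comm] using
        ((hasDerivAt_id m).mul_const (1 - r)).mul_const (r ^ (j - 1) : ℝ)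
    have h2 := (h1.fun_neg).exp
    have h3 := h2.const_sub 1
    refine h3.congr_deriv ?_
    simp only [hdg, hc]
    ring
  set a : ℝ := r ^ k with ha
  have hapos : 0 < a := zpow_pos hr0 _
  have hhd : HasDerivAt (fun x : ℝ => Real.exp (-(x * a))) (Real.exp (-(m * a)) * (-a)) m := by
    have h1 : HasDerivAt (fun x : ℝ => -(x * a)) (-a) m := (hasDerivAt_mul_const a).neg
    exact h1.exp
  have hPd : HasDerivAt (fun x : ℝ => ∏ j ∈ S, g j x)
      (∑ i ∈ S, (∏ j ∈ S.erase i, g j m) • dg i) m :=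
    HasDerivAt.fun_finsetProd fun i _ => hgd i
  have hfd : HasDerivAt (fun x : ℝ =>
      Real.exp (-(x * r ^ k)) * ∏ j ∈ S, (1 - Real.exp (-(x * (1 - r) * r ^ (j - 1)))))
      ((Real.exp (-(m * a)) * (-a)) * (∏ j ∈ S, g j m)
        + Real.exp (-(m * a)) * (∑ i ∈ S, (∏ j ∈ S.erase i, g j m) • dg i)) m :=
    hhd.mul hPd
  rw [hfd.deriv]
  -- bounds
  have hexp_le : ∀ u : ℝ, 0 ≤ u → Real.exp (-u) ≤ 1 := fun u hu =>
    Real.exp_le_one_iff.2 (by linarith)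
  have hg01 : ∀ j : ℤ, 0 ≤ g j m ∧ g j m ≤ 1 := by
    intro j
    constructor
    · have : Real.exp (-(m * (1 - r) * r ^ (j - 1))) ≤ 1 := by
        apply hexp_le
        have := hcpos j
        simp only [hc] at this
        nlinarith
      simp only [g]; linarith
    · have := Real.exp_pos (-(m * (1 - r) * r ^ (j - 1)))
      simp only [g]; linarith
  have hP01 : 0 ≤ ∏ j ∈ S, g j m ∧ (∏ j ∈ S, g j m) ≤ 1 :=
    ⟨Finset.prod_nonneg fun j _ => (hg01 j).1,
     Finset.prod_le_one (fun j _ => (hg01 j).1) (fun j _ => (hg01 j).2)⟩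
  have hE01 : 0 < Real.exp (-(m * a)) ∧ Real.exp (-(m * a)) ≤ 1 :=
    ⟨Real.exp_pos _, hexp_le _ (by positivity)⟩
  have hdg_le : ∀ i : ℤ, 0 ≤ dg i ∧ dg i ≤ 1 / m := by
    intro i
    have hci := hcpos i
    constructor
    · exact mul_nonneg hci.le (Real.exp_pos _).le
    · -- c * exp(-(m*c)) ≤ 1/m  ↔  m*c*exp(-(m*c)) ≤ 1
      have hu : (0:ℝ) < m * c i := mul_pos hm0 hci
      have h1 : m * c i ≤ Real.exp (m * c i) := by
        have := Real.add_one_le_exp (m * c i); linarith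
      have h2 : m * c i * Real.exp (-(m * c i)) ≤ 1 := by
        rw [Real.exp_neg]
        rw [mul_inv_le_iff₀ (Real.exp_pos _), one_mul]
        exact h1
      rw [div_eq_inv_mul, ← mul_le_mul_iff_of_pos_left hm0]
      calc m * (c i * Real.exp (-(m * c i))) = m * c i * Real.exp (-(m * c i)) := by ring
        _ ≤ 1 := h2
        _ = m * (m⁻¹ * 1) := by field_simp
  -- sum bound
  have hsum : (∑ i ∈ S, (∏ j ∈ S.erase i, g j m) • dg i) ≤ S.card * (1 / m) := by
    calc (∑ i ∈ S, (∏ j ∈ S.erase i, g j m) • dg i)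
          ≤ ∑ i ∈ S, 1 / m := by
            apply Finset.sum_le_sum
            intro i _
            have h1 : (∏ j ∈ S.erase i, g j m) ≤ 1 :=
              Finset.prod_le_one (fun j _ => (hg01 j).1) (fun j _ => (hg01 j).2)
            have h2 : 0 ≤ (∏ j ∈ S.erase i, g j m) :=
              Finset.prod_nonneg fun j _ => (hg01 j).1
            calc (∏ j ∈ S.erase i, g j m) • dg i = (∏ j ∈ S.erase i, g j m) * dg i := rfl
              _ ≤ 1 * (1 / m) := mul_le_mul h1 (hdg_le i).2 (hdg_le i).1 zero_le_one
              _ = 1 / m := one_mul _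
      _ = S.card * (1 / m) := by rw [Finset.sum_const, nsmul_eq_mul]
  have hsum_nonneg : 0 ≤ ∑ i ∈ S, (∏ j ∈ S.erase i, g j m) • dg i :=
    Finset.sum_nonneg fun i _ => smul_nonneg
      (Finset.prod_nonneg fun j _ => (hg01 j).1) (hdg_le i).1
  have hcard : (S.card : ℝ) = ((k - kminus + 1 : ℤ) : ℝ) := by
    have : S.card = (k + 1 - kminus).toNat := Int.card_Icc kminus k
    rw [this]
    rw [← Int.cast_natCast, Int.toNat_of_nonneg (by omega)]
    push_cast; ring
  have habs : |((Real.exp (-(m * a)) * (-a)) * (∏ j ∈ S, g j m)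
        + Real.exp (-(m * a)) * (∑ i ∈ S, (∏ j ∈ S.erase i, g j m) • dg i))| ≤
      a + ((k - kminus + 1 : ℤ) : ℝ) / m := by
    have t1 : |(Real.exp (-(m * a)) * (-a)) * (∏ j ∈ S, g j m)| ≤ a := by
      rw [abs_mul, abs_mul, abs_neg, abs_of_pos hE01.1, abs_of_pos hapos,
        abs_of_nonneg hP01.1]
      calc Real.exp (-(m * a)) * a * (∏ j ∈ S, g j m)
          ≤ 1 * a * 1 := by
            apply mul_le_mul _ hP01.2 hP01.1 (by positivity)
            exact mul_le_mul_of_nonneg_right hE01.2 hapos.le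
        _ = a := by ring
    have t2 : |Real.exp (-(m * a)) * (∑ i ∈ S, (∏ j ∈ S.erase i, g j m) • dg i)| ≤
        ((k - kminus + 1 : ℤ) : ℝ) / m := by
      rw [abs_mul, abs_of_pos hE01.1, abs_of_nonneg hsum_nonneg]
      calc Real.exp (-(m * a)) * (∑ i ∈ S, (∏ j ∈ S.erase i, g j m) • dg i)
          ≤ 1 * (S.card * (1 / m)) := mul_le_mul hE01.2 hsum hsum_nonneg one_pos.le
        _ = ((k - kminus + 1 : ℤ) : ℝ) / m := by rw [one_mul, hcard]; ring
    calc _ ≤ _ := abs_add_le _ _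
      _ ≤ a + ((k - kminus + 1 : ℤ) : ℝ) / m := add_le_add t1 t2
  refine habs.trans (add_le_add_left ?_ _)
  exact zpow_le_zpow_right_of_le_one₀ hr0 hr1.le hkk
end

section
/- Suppose a class of compositions C satisfies: the number of compositions of n in C is at most K r^{-n} for all n, and at least K' r^{-n} for all large n, with constants K, K' > 0 and 0 < r < 1. If every composition of n containing a specified subcomposition s (with part sum Σ(s) = σ) can be decomposed as a pair of structures of total weight n - σ each counted by a class with at most K r^{-ℓ} objects of weight ℓ, then the probability that a uniformly random composition of n in C contains s is at most B·n·r^{σ} for some constant B depending only on C. -/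
open Filter Finset

/-- if a class has between `K' r^(-n)` (for large `n`) and
`K r^(-n)` compositions of `n`, and the compositions of `n` containing a fixed
subcomposition of sum `σ` inject into pairs of objects of total weight `n - σ`
from families with at most `K r^(-ℓ)` objects of weight `ℓ`, then the
probability that a random composition of `n` contains the subcomposition is at
most `B n r^σ` for some constant `B`. -/
theorem stmt11 (r K K' : ℝ) (hr0 : 0 < r) (hr1 : r < 1) (hK : 0 < K) (hK' : 0 < K')
    (cnt Ncon f g : ℕ → ℕ) (σ : ℕ)
    (hub : ∀ n, (cnt n : ℝ) ≤ K * (1 / r) ^ n)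
    (hlb : ∃ N0, ∀ n ≥ N0, K' * (1 / r) ^ n ≤ (cnt n : ℝ))
    (hf : ∀ ℓ, (f ℓ : ℝ) ≤ K * (1 / r) ^ ℓ)
    (hg : ∀ ℓ, (g ℓ : ℝ) ≤ K * (1 / r) ^ ℓ)
    (hdec : ∀ n, σ ≤ n →
      Ncon n ≤ ∑ a ∈ Finset.range (n - σ + 1), f a * g (n - σ - a)) :
    ∃ B : ℝ, 0 < B ∧ ∀ᶠ n : ℕ in atTop,
      (Ncon n : ℝ) / (cnt n : ℝ) ≤ B * n * r ^ σ := by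
  obtain ⟨N0, hN0⟩ := hlb
  refine ⟨2 * K ^ 2 / K', by positivity, ?_⟩
  filter_upwards [eventually_ge_atTop (max N0 (σ + 1))] with n hn
  have hn0 : N0 ≤ n := le_trans (le_max_left _ _) hn
  have hnσ : σ + 1 ≤ n := le_trans (le_max_right _ _) hn
  have hσ : σ ≤ n := le_trans (Nat.le_succ σ) hnσ
  have hn1 : 1 ≤ n := le_trans (Nat.one_le_iff_ne_zero.mpr (Nat.succ_ne_zero σ)) hnσ
  have hcnt : (0 : ℝ) < cnt n := lt_of_lt_of_le (by positivity) (hN0 n hn0)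
  have hNum : (Ncon n : ℝ) ≤ ((n - σ + 1 : ℕ) : ℝ) * (K ^ 2 * (1 / r) ^ (n - σ)) := by
    have h1 : (Ncon n : ℝ) ≤
        ((∑ a ∈ range (n - σ + 1), f a * g (n - σ - a) : ℕ) : ℝ) := by
      exact_mod_cast hdec n hσ
    refine h1.trans ?_
    rw [Nat.cast_sum]
    calc ∑ a ∈ range (n - σ + 1), ((f a * g (n - σ - a) : ℕ) : ℝ)
        ≤ ∑ a ∈ range (n - σ + 1), K ^ 2 * (1 / r) ^ (n - σ) := by
          refine Finset.sum_le_sum fun a ha => ?_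
          have haa : a ≤ n - σ := Nat.lt_succ_iff.mp (mem_range.mp ha)
          push_cast
          calc (f a : ℝ) * (g (n - σ - a) : ℝ)
              ≤ (K * (1 / r) ^ a) * (K * (1 / r) ^ (n - σ - a)) :=
                mul_le_mul (hf a) (hg _) (Nat.cast_nonneg _) (by positivity)
            _ = K ^ 2 * (1 / r) ^ (a + (n - σ - a)) := by rw [pow_add]; ring
            _ = K ^ 2 * (1 / r) ^ (n - σ) := by rw [Nat.add_sub_cancel' haa]
      _ = ((n - σ + 1 : ℕ) : ℝ) * (K ^ 2 * (1 / r) ^ (n - σ)) := by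
          rw [Finset.sum_const, card_range, nsmul_eq_mul]
  rw [div_le_iff₀ hcnt]
  have hstep : ((n - σ + 1 : ℕ) : ℝ) ≤ 2 * n := by
    have : n - σ + 1 ≤ 2 * n := by omega
    exact_mod_cast this
  have hpowpos : (0 : ℝ) < (1 / r) ^ (n - σ) := by positivity
  calc (Ncon n : ℝ) ≤ ((n - σ + 1 : ℕ) : ℝ) * (K ^ 2 * (1 / r) ^ (n - σ)) := hNum
    _ ≤ (2 * n) * (K ^ 2 * (1 / r) ^ (n - σ)) :=
        mul_le_mul_of_nonneg_right hstep (by positivity)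
    _ = (2 * K ^ 2 / K' * n * r ^ σ) * (K' * (1 / r) ^ n) := by
        have hrn : (1 / r : ℝ) ^ n = (1 / r) ^ (n - σ) * (1 / r) ^ σ := by
          rw [← pow_add, Nat.sub_add_cancel hσ]
        rw [hrn]
        field_simp
        ring_nf
        rw [← mul_pow, mul_inv_cancel₀ hr0.ne', one_pow]
    _ ≤ (2 * K ^ 2 / K' * n * r ^ σ) * cnt n := by
        refine mul_le_mul_of_nonneg_left (hN0 n hn0) (by positivity)
end
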